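/- Let A ⊆ R^p be a nonempty closed convex set and let P_A(x) = argmin_{y∈A} ||y−x||² denote the metric projection onto A (which is well defined and single-valued). If P_A(x+y) = P_A(x) + P_A(y) for all x, y ∈ R^p, then A is a linear subspace of R^p. -/

import Mathlib

/-- If `S ⊆ ℝ^p` is a nonempty closed convex set and the metric
projection `P` onto `S` (the map sending `x` to the unique closest point of `S`)
is additive, i.e. `P (x + y) = P x + P y` for all `x, y`, then `S` is a linear
subspace of `ℝ^p`. -/
theorem statement1 (p : ℕ) (S : Set (EuclideanSpace ℝ (Fin p)))
    (hne : S.Nonempty) (hclosed : IsClosed S) (hconv : Convex ℝ S)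
    (P : EuclideanSpace ℝ (Fin p) → EuclideanSpace ℝ (Fin p))
    (hPmem : ∀ x, P x ∈ S)
    (hPmin : ∀ x, ∀ y ∈ S, ‖P x - x‖ ≤ ‖y - x‖)
    (hadd : ∀ x y, P (x + y) = P x + P y) :
    ∃ V : Submodule ℝ (EuclideanSpace ℝ (Fin p)), S = (V : Set (EuclideanSpace ℝ (Fin p))) := by
  have hfix : ∀ s ∈ S, P s = s := by
    intro s hs
    have h := hPmin s s hs
    simp only [sub_self, norm_zero] at h
    have := norm_le_zero_iff.mp h
    exact sub_eq_zero.mp this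
  have h0 : P 0 = 0 := by
    have h := hadd 0 0
    rw [add_zero] at h
    exact (left_eq_add.mp h)
  have h0S : (0 : EuclideanSpace ℝ (Fin p)) ∈ S := h0 ▸ hPmem 0
  have haddS : ∀ s ∈ S, ∀ t ∈ S, s + t ∈ S := by
    intro s hs t ht
    have h := hPmem (s + t)
    rwa [hadd, hfix s hs, hfix t ht] at h
  have hnegS : ∀ s ∈ S, -s ∈ S := by
    intro s hs
    have h := hadd s (-s)
    rw [add_neg_cancel, h0, hfix s hs] at h
    have h2 := hPmem (-s)
    rwa [(eq_neg_of_add_eq_zero_right h.symm)] at h2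
  have hnatS : ∀ n : ℕ, ∀ s ∈ S, (n : ℝ) • s ∈ S := by
    intro n
    induction n with
    | zero => intro s hs; simpa using h0S
    | succ k ih =>
      intro s hs
      have : ((k + 1 : ℕ) : ℝ) • s = (k : ℝ) • s + s := by
        push_cast; rw [add_smul, one_smul]
      rw [this]
      exact haddS _ (ih s hs) s hs
  have hsmulnn : ∀ c : ℝ, 0 ≤ c → ∀ s ∈ S, c • s ∈ S := by
    intro c hc s hs
    obtain ⟨n, hn⟩ := exists_nat_ge c
    rcases eq_or_lt_of_le hc with h | h
    · simpa [← h] using h0S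
    · have hn0 : (0 : ℝ) < n := lt_of_lt_of_le h hn
      have ha0 : 0 ≤ 1 - c / n := by
        rw [sub_nonneg, div_le_one hn0]; exact hn
      have ha1 : 0 ≤ c / n := div_nonneg hc hn0.le
      have key := hconv h0S (hnatS n s hs) ha0 ha1 (by ring)
      have : (1 - c / n) • (0 : EuclideanSpace ℝ (Fin p)) + (c / n) • ((n : ℝ) • s)
          = c • s := by
        rw [smul_zero, zero_add, smul_smul, div_mul_cancel₀ c hn0.ne']
      rwa [this] at key
  have hsmulS : ∀ c : ℝ, ∀ s ∈ S, c • s ∈ S := by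
    intro c s hs
    rcases le_or_gt 0 c with h | h
    · exact hsmulnn c h s hs
    · have := hsmulnn (-c) (by linarith) (-s) (hnegS s hs)
      simpa using this
  refine ⟨{ carrier := S,
            add_mem' := fun {a b} ha hb => haddS a ha b hb,
            zero_mem' := h0S,
            smul_mem' := fun c {x} hx => hsmulS c x hx }, rfl⟩
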